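/- arXiv:2504.02944 — 2 statements merged into one kernel-verified Lean document; each statement's English description precedes it below -/
import Mathlib

section
/- Define the six qubit states of the six-state QKD protocol: ρ_1 := (1/2)(1 + σz), ρ_2 := (1/2)(1 − σz), ρ_3 := (1/2)(1 + σx), ρ_4 := (1/2)(1 − σx), ρ_5 := (1/2)(1 + σy), ρ_6 := (1/2)(1 − σy), and for η ∈ [0,1] the noisy states ρ^η_a := η • ρ_a + (1−η) • (1/2) • 1. Then the set of states (ρ^η_a)_{a=1,...,6} on ℂ² is classical if and only if η ≤ 1/√3; i.e. the white-noise robustness of the six-state set equals 1/√3. -/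
open Matrix BigOperators
open scoped ComplexOrder

noncomputable section

def σx : Matrix (Fin 2) (Fin 2) ℂ := !![0, 1; 1, 0]
def σy : Matrix (Fin 2) (Fin 2) ℂ := !![0, -Complex.I; Complex.I, 0]
def σz : Matrix (Fin 2) (Fin 2) ℂ := !![1, 0; 0, -1]

/-- The noncontextual preparation-assignment polytope of a set of states. -/
def statesPolytope {d : ℕ} {A : Type*} [Fintype A]
    (ρ : A → Matrix (Fin d) (Fin d) ℂ) : Set (A → ℝ) :=
  {q | (∀ a, 0 ≤ q a) ∧ (∑ a : A, q a = 1) ∧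
    ∀ α : A → ℝ, (∑ a : A, α a • ρ a = 0) → (∑ a : A, α a * q a = 0)}

/-- A set of states is classical. -/
def IsClassicalStates {d : ℕ} {A : Type*} [Fintype A]
    (ρ : A → Matrix (Fin d) (Fin d) ℂ) : Prop :=
  ∃ (n : ℕ) (σ : Fin n → Matrix (Fin d) (Fin d) ℂ) (q : Fin n → A → ℝ),
    (∀ l, (σ l).PosSemidef) ∧
    (∀ l, q l ∈ statesPolytope ρ) ∧
    (∀ a : A, ρ a = ∑ l, q l a • σ l)

/-- The six qubit states of the six-state QKD protocol. -/
def sixStates : Fin 6 → Matrix (Fin 2) (Fin 2) ℂ :=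
  ![(2 : ℝ)⁻¹ • ((1 : Matrix (Fin 2) (Fin 2) ℂ) + σz),
    (2 : ℝ)⁻¹ • ((1 : Matrix (Fin 2) (Fin 2) ℂ) - σz),
    (2 : ℝ)⁻¹ • ((1 : Matrix (Fin 2) (Fin 2) ℂ) + σx),
    (2 : ℝ)⁻¹ • ((1 : Matrix (Fin 2) (Fin 2) ℂ) - σx),
    (2 : ℝ)⁻¹ • ((1 : Matrix (Fin 2) (Fin 2) ℂ) + σy),
    (2 : ℝ)⁻¹ • ((1 : Matrix (Fin 2) (Fin 2) ℂ) - σy)]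

def mats (η : ℝ) : Fin 6 → Matrix (Fin 2) (Fin 2) ℂ :=
  ![!![Complex.ofReal ((1+η)/2), 0; 0, Complex.ofReal ((1-η)/2)],
    !![Complex.ofReal ((1-η)/2), 0; 0, Complex.ofReal ((1+η)/2)],
    !![Complex.ofReal (2⁻¹), Complex.ofReal (η/2); Complex.ofReal (η/2), Complex.ofReal (2⁻¹)],
    !![Complex.ofReal (2⁻¹), Complex.ofReal (-η/2); Complex.ofReal (-η/2), Complex.ofReal (2⁻¹)],
    !![Complex.ofReal (2⁻¹), Complex.ofReal (η/2) * (-Complex.I);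
       Complex.ofReal (η/2) * Complex.I, Complex.ofReal (2⁻¹)],
    !![Complex.ofReal (2⁻¹), Complex.ofReal (η/2) * Complex.I;
       Complex.ofReal (η/2) * (-Complex.I), Complex.ofReal (2⁻¹)]]

lemma rho_a (η : ℝ) (a : Fin 6) :
    η • sixStates a + ((1 - η) * (2 : ℝ)⁻¹) • (1 : Matrix (Fin 2) (Fin 2) ℂ) = mats η a := by
  have key : ∀ b : Fin 6, η • sixStates b + ((1 - η) * (2 : ℝ)⁻¹) • (1 : Matrix (Fin 2) (Fin 2) ℂ)
      = mats η b := by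
    intro b
    have h1 : ∀ M N : Matrix (Fin 2) (Fin 2) ℂ,
        (∀ i j : Fin 2, M i j = N i j) → M = N := by
      intro M N h; ext i j; exact h i j
    fin_cases b <;>
      (apply h1; intro i j; fin_cases i <;> fin_cases j <;>
        (simp [sixStates, mats, σx, σy, σz, Matrix.one_apply, Matrix.add_apply,
           Matrix.smul_apply, Matrix.sub_apply, Complex.real_smul,
           show (5:Fin 6) = Fin.succ 4 from rfl, Matrix.cons_val_succ]
         try push_cast
         try ring))
  exact key a

lemma dep_constraints (η : ℝ) (α : Fin 6 → ℝ)
    (h : ∑ a : Fin 6, α a • (η • sixStates a + ((1 - η) * (2 : ℝ)⁻¹) •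
        (1 : Matrix (Fin 2) (Fin 2) ℂ)) = 0) :
    (α 0 + α 1 + α 2 + α 3 + α 4 + α 5 = 0) ∧ η * (α 0 - α 1) = 0 ∧
      η * (α 2 - α 3) = 0 ∧ η * (α 4 - α 5) = 0 := by
  simp_rw [rho_a] at h
  have key : ∀ i j : Fin 2, (α 0 : ℂ) * mats η 0 i j + α 1 * mats η 1 i j
      + α 2 * mats η 2 i j + α 3 * mats η 3 i j + α 4 * mats η 4 i j
      + α 5 * mats η 5 i j = 0 := by
    intro i j
    have h' := congrArg (fun M : Matrix (Fin 2) (Fin 2) ℂ => M i j) h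
    simp only [Matrix.sum_apply, Fin.sum_univ_six, Matrix.smul_apply,
      Complex.real_smul, Matrix.zero_apply] at h'
    linear_combination h'
  have h00 : (α 0 : ℂ) * Complex.ofReal ((1+η)/2) + α 1 * Complex.ofReal ((1-η)/2)
      + α 2 * Complex.ofReal (2⁻¹) + α 3 * Complex.ofReal (2⁻¹)
      + α 4 * Complex.ofReal (2⁻¹) + α 5 * Complex.ofReal (2⁻¹) = 0 := key 0 0
  have h11 : (α 0 : ℂ) * Complex.ofReal ((1-η)/2) + α 1 * Complex.ofReal ((1+η)/2)
      + α 2 * Complex.ofReal (2⁻¹) + α 3 * Complex.ofReal (2⁻¹)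
      + α 4 * Complex.ofReal (2⁻¹) + α 5 * Complex.ofReal (2⁻¹) = 0 := key 1 1
  have h01 : (α 0 : ℂ) * 0 + α 1 * 0 + α 2 * Complex.ofReal (η/2) + α 3 * Complex.ofReal (-η/2)
      + α 4 * (Complex.ofReal (η/2) * (-Complex.I)) + α 5 * (Complex.ofReal (η/2) * Complex.I) = 0 :=
    key 0 1
  have r00 : α 0 * ((1+η)/2) + α 1 * ((1-η)/2) + α 2 * (2:ℝ)⁻¹ + α 3 * (2:ℝ)⁻¹
      + α 4 * (2:ℝ)⁻¹ + α 5 * (2:ℝ)⁻¹ = 0 := by exact_mod_cast h00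
  have r11 : α 0 * ((1-η)/2) + α 1 * ((1+η)/2) + α 2 * (2:ℝ)⁻¹ + α 3 * (2:ℝ)⁻¹
      + α 4 * (2:ℝ)⁻¹ + α 5 * (2:ℝ)⁻¹ = 0 := by exact_mod_cast h11
  have hre := congrArg Complex.re h01
  have him := congrArg Complex.im h01
  simp only [Complex.add_re, Complex.add_im, Complex.mul_re, Complex.mul_im,
    Complex.ofReal_re, Complex.ofReal_im, Complex.zero_re, Complex.zero_im,
    Complex.I_re, Complex.I_im, Complex.neg_re, Complex.neg_im] at hre him
  refine ⟨by linarith, by linarith, by nlinarith [hre, him], by nlinarith [hre, him]⟩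

lemma psd2 (a d : ℝ) (b : ℂ) (ha : 0 ≤ a) (hd : 0 ≤ d) (h : Complex.normSq b ≤ a * d) :
    (!![(a:ℂ), b; (starRingEnd ℂ) b, (d:ℂ)]).PosSemidef := by
  refine Matrix.PosSemidef.of_dotProduct_mulVec_nonneg ?_ ?_
  · ext i j
    fin_cases i <;> fin_cases j <;>
      simp [Matrix.conjTranspose_apply, Complex.conj_ofReal]
  · intro x
    have hx : star x ⬝ᵥ (!![(a:ℂ), b; (starRingEnd ℂ) b, (d:ℂ)] *ᵥ x)
        = (starRingEnd ℂ) (x 0) * (a * x 0 + b * x 1)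
          + (starRingEnd ℂ) (x 1) * ((starRingEnd ℂ) b * x 0 + d * x 1) := by
      simp [dotProduct, Matrix.mulVec, Fin.sum_univ_two, mul_comm]
    rw [hx, Complex.le_def]
    have hb := h
    rw [Complex.normSq_apply] at hb
    constructor
    · simp only [Complex.add_re, Complex.mul_re, Complex.mul_im, Complex.add_im,
        Complex.ofReal_re, Complex.ofReal_im, Complex.conj_re, Complex.conj_im, Complex.zero_re]
      rcases ha.lt_or_eq with ha' | ha'
      · nlinarith [sq_nonneg (a * (x 0).re + b.re * (x 1).re - b.im * (x 1).im),
          sq_nonneg (a * (x 0).im + b.re * (x 1).im + b.im * (x 1).re),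
          mul_nonneg (sub_nonneg.2 hb) (add_nonneg (sq_nonneg (x 1).re) (sq_nonneg (x 1).im)),
          ha'.le, ha']
      · have hbr : b.re = 0 := by nlinarith [sq_nonneg b.re, sq_nonneg b.im]
        have hbi : b.im = 0 := by nlinarith [sq_nonneg b.re, sq_nonneg b.im]
        rw [hbr, hbi, ← ha']
        nlinarith [mul_nonneg hd (add_nonneg (sq_nonneg (x 1).re) (sq_nonneg (x 1).im))]
    · simp only [Complex.add_im, Complex.mul_re, Complex.mul_im, Complex.add_re,
        Complex.ofReal_re, Complex.ofReal_im, Complex.conj_re, Complex.conj_im, Complex.zero_im]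
      ring

lemma psd2' (a d c e : ℝ) (ha : 0 ≤ a) (hd : 0 ≤ d) (h : c^2 + e^2 ≤ a * d) :
    (!![Complex.ofReal a, Complex.ofReal c + Complex.ofReal e * Complex.I;
        Complex.ofReal c - Complex.ofReal e * Complex.I, Complex.ofReal d]).PosSemidef := by
  have hb : Complex.ofReal c - Complex.ofReal e * Complex.I
      = (starRingEnd ℂ) (Complex.ofReal c + Complex.ofReal e * Complex.I) := by
    simp [Complex.ext_iff]
  have hn : Complex.normSq (Complex.ofReal c + Complex.ofReal e * Complex.I) ≤ a * d := by
    rw [Complex.normSq_apply]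
    simp [Complex.add_re, Complex.add_im]
    nlinarith [h]
  have := psd2 a d (Complex.ofReal c + Complex.ofReal e * Complex.I) ha hd hn
  rw [hb]
  convert this using 2

lemma cs_bound (dx dy dz x y z t : ℝ) (hdx : |dx| ≤ 1/3) (hdy : |dy| ≤ 1/3)
    (hdz : |dz| ≤ 1/3) (hr : x^2 + y^2 + z^2 ≤ t^2) (ht : 0 ≤ t) :
    dx*x + dy*y + dz*z ≤ t / Real.sqrt 3 := by
  obtain ⟨ha1, ha2⟩ := abs_le.mp hdx
  obtain ⟨hb1, hb2⟩ := abs_le.mp hdy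
  obtain ⟨hc1, hc2⟩ := abs_le.mp hdz
  have hdx2 : dx^2 ≤ 1/9 := by nlinarith
  have hdy2 : dy^2 ≤ 1/9 := by nlinarith
  have hdz2 : dz^2 ≤ 1/9 := by nlinarith
  have hS2 : (dx*x + dy*y + dz*z)^2 ≤ t^2/3 := by
    nlinarith [sq_nonneg (dx*y - dy*x), sq_nonneg (dx*z - dz*x), sq_nonneg (dy*z - dz*y),
      sq_nonneg x, sq_nonneg y, sq_nonneg z, sq_nonneg t,
      mul_nonneg (mul_nonneg (sq_nonneg dx) (sq_nonneg x)) (sq_nonneg y)]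
  have h1 : dx*x + dy*y + dz*z ≤ Real.sqrt ((dx*x + dy*y + dz*z)^2) := by
    rw [Real.sqrt_sq_eq_abs]; exact le_abs_self _
  have h2 : Real.sqrt ((dx*x + dy*y + dz*z)^2) ≤ Real.sqrt (t^2/3) := Real.sqrt_le_sqrt hS2
  have h3 : Real.sqrt (t^2/3) = t / Real.sqrt 3 := by
    rw [Real.sqrt_div (sq_nonneg t), Real.sqrt_sq ht]
  linarith [h1, h2, h3.symm ▸ h2]

def sgx : Fin 8 → ℝ := ![1,1,1,1,-1,-1,-1,-1]
def sgy : Fin 8 → ℝ := ![1,1,-1,-1,1,1,-1,-1]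
def sgz : Fin 8 → ℝ := ![1,-1,1,-1,1,-1,1,-1]

def sig (η : ℝ) : Fin 8 → Matrix (Fin 2) (Fin 2) ℂ := fun l =>
  !![Complex.ofReal (3/8*(1 + η * sgz l)),
     Complex.ofReal (3/8*(η * sgx l)) + Complex.ofReal (-(3/8)*(η * sgy l)) * Complex.I;
     Complex.ofReal (3/8*(η * sgx l)) - Complex.ofReal (-(3/8)*(η * sgy l)) * Complex.I,
     Complex.ofReal (3/8*(1 - η * sgz l))]

def qfun : Fin 8 → Fin 6 → ℝ := fun l =>
  ![(1 + sgz l)/6, (1 - sgz l)/6, (1 + sgx l)/6, (1 - sgx l)/6, (1 + sgy l)/6, (1 - sgy l)/6]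

lemma sig_psd (η : ℝ) (h0 : 0 ≤ η) (h1 : η ≤ 1) (h3 : 3 * η^2 ≤ 1) (l : Fin 8) :
    (sig η l).PosSemidef := by
  have hx2 : sgx l ^ 2 = 1 := by fin_cases l <;> norm_num [sgx]
  have hy2 : sgy l ^ 2 = 1 := by fin_cases l <;> norm_num [sgy]
  have hz2 : sgz l ^ 2 = 1 := by fin_cases l <;> norm_num [sgz]
  have hz1 : |sgz l| ≤ 1 := by fin_cases l <;> norm_num [sgz]
  obtain ⟨hza, hzb⟩ := abs_le.mp hz1
  apply psd2'
  · nlinarith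
  · nlinarith
  · have he : η * sgz l ≤ 1 ∧ -1 ≤ η * sgz l := by constructor <;> nlinarith
    nlinarith [he.1, he.2, sq_nonneg (η * sgz l)]

lemma sgx0 : sgx 0 = 1 := rfl
lemma sgx1 : sgx 1 = 1 := rfl
lemma sgx2 : sgx 2 = 1 := rfl
lemma sgx3 : sgx 3 = 1 := rfl
lemma sgx4 : sgx 4 = -1 := rfl
lemma sgx5 : sgx 5 = -1 := rfl
lemma sgx6 : sgx 6 = -1 := rfl
lemma sgx7 : sgx 7 = -1 := rfl
lemma sgy0 : sgy 0 = 1 := rfl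
lemma sgy1 : sgy 1 = 1 := rfl
lemma sgy2 : sgy 2 = -1 := rfl
lemma sgy3 : sgy 3 = -1 := rfl
lemma sgy4 : sgy 4 = 1 := rfl
lemma sgy5 : sgy 5 = 1 := rfl
lemma sgy6 : sgy 6 = -1 := rfl
lemma sgy7 : sgy 7 = -1 := rfl
lemma sgz0 : sgz 0 = 1 := rfl
lemma sgz1 : sgz 1 = -1 := rfl
lemma sgz2 : sgz 2 = 1 := rfl
lemma sgz3 : sgz 3 = -1 := rfl
lemma sgz4 : sgz 4 = 1 := rfl
lemma sgz5 : sgz 5 = -1 := rfl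
lemma sgz6 : sgz 6 = 1 := rfl
lemma sgz7 : sgz 7 = -1 := rfl
lemma qfun0 (l : Fin 8) : qfun l 0 = (1 + sgz l)/6 := rfl
lemma qfun1 (l : Fin 8) : qfun l 1 = (1 - sgz l)/6 := rfl
lemma qfun2 (l : Fin 8) : qfun l 2 = (1 + sgx l)/6 := rfl
lemma qfun3 (l : Fin 8) : qfun l 3 = (1 - sgx l)/6 := rfl
lemma qfun4 (l : Fin 8) : qfun l 4 = (1 + sgy l)/6 := rfl
lemma qfun5 (l : Fin 8) : qfun l 5 = (1 - sgy l)/6 := rfl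

lemma sg_bounds (l : Fin 8) : |sgx l| ≤ 1 ∧ |sgy l| ≤ 1 ∧ |sgz l| ≤ 1 := by
  fin_cases l <;> norm_num [sgx, sgy, sgz]

lemma vec6_nonneg (v : Fin 6 → ℝ) (h0 : 0 ≤ v 0) (h1 : 0 ≤ v 1) (h2 : 0 ≤ v 2)
    (h3 : 0 ≤ v 3) (h4 : 0 ≤ v 4) (h5 : 0 ≤ v 5) (a : Fin 6) : 0 ≤ v a := by
  fin_cases a <;> assumption

lemma qfun_nonneg (l : Fin 8) (a : Fin 6) : 0 ≤ qfun l a := by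
  obtain ⟨hx, hy, hz⟩ := sg_bounds l
  rw [abs_le] at hx hy hz
  refine vec6_nonneg _ ?_ ?_ ?_ ?_ ?_ ?_ a
  all_goals first
    | (rw [qfun0]; linarith) | (rw [qfun1]; linarith) | (rw [qfun2]; linarith)
    | (rw [qfun3]; linarith) | (rw [qfun4]; linarith) | (rw [qfun5]; linarith)

lemma qfun_sum (l : Fin 8) : ∑ a : Fin 6, qfun l a = 1 := by
  rw [Fin.sum_univ_six, qfun0, qfun1, qfun2, qfun3, qfun4, qfun5]; ring

lemma helper6 (P : Fin 6 → Prop) (h0 : P 0) (h1 : P 1) (h2 : P 2) (h3 : P 3)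
    (h4 : P 4) (h5 : P 5) : ∀ a, P a := by
  intro a; fin_cases a <;> assumption

lemma helper2 (P : Fin 2 → Prop) (h0 : P 0) (h1 : P 1) : ∀ i, P i := by
  intro i; fin_cases i <;> assumption

lemma decomp (η : ℝ) (a : Fin 6) : mats η a = ∑ l : Fin 8, qfun l a • sig η l := by
  have main : ∀ a : Fin 6, ∀ i j : Fin 2,
      mats η a i j = ∑ l : Fin 8, (qfun l a : ℂ) * sig η l i j := by
    refine helper6 _ ?_ ?_ ?_ ?_ ?_ ?_ <;>
      refine helper2 _ ?_ ?_ <;>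
        refine helper2 _ ?_ ?_ <;>
          (rw [Fin.sum_univ_eight]
           simp only [qfun0, qfun1, qfun2, qfun3, qfun4, qfun5]
           simp only [sgx0, sgx1, sgx2, sgx3, sgx4, sgx5, sgx6, sgx7,
             sgy0, sgy1, sgy2, sgy3, sgy4, sgy5, sgy6, sgy7,
             sgz0, sgz1, sgz2, sgz3, sgz4, sgz5, sgz6, sgz7,
             mats, sig, Matrix.cons_val', Matrix.cons_val_zero, Matrix.cons_val_one,
             Matrix.head_cons, Matrix.empty_val', Matrix.cons_val_fin_one,
             Matrix.head_fin_const, Matrix.of_apply, Matrix.cons_val_two, Matrix.cons_val_three,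
             Matrix.cons_val_four, Matrix.tail_cons,
             show (5:Fin 6) = Fin.succ 4 from rfl, Matrix.cons_val_succ]
           push_cast
           ring)
  ext i j
  rw [main a i j, Matrix.sum_apply]
  exact Finset.sum_congr rfl fun l _ => by simp [Matrix.smul_apply, Complex.real_smul]

lemma statesPolytope_def {d : ℕ} {A : Type*} [Fintype A] (ρ : A → Matrix (Fin d) (Fin d) ℂ)
    (q : A → ℝ) : q ∈ statesPolytope ρ ↔ (∀ a, 0 ≤ q a) ∧ (∑ a : A, q a = 1) ∧
    ∀ α : A → ℝ, (∑ a : A, α a • ρ a = 0) → (∑ a : A, α a * q a = 0) := Iff.rfl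

lemma easy (η : ℝ) (h0 : 0 ≤ η) (h1 : η ≤ 1) (hle : η ≤ 1 / Real.sqrt 3) :
    IsClassicalStates (fun a : Fin 6 =>
      η • sixStates a + ((1 - η) * (2 : ℝ)⁻¹) • (1 : Matrix (Fin 2) (Fin 2) ℂ)) := by
  rcases eq_or_lt_of_le h0 with hz | hpos
  · -- η = 0
    refine ⟨1, ![(3:ℝ) • (1 : Matrix (Fin 2) (Fin 2) ℂ)], ![fun _ => 1/6], ?_, ?_, ?_⟩
    · intro l
      have h3 : ((3:ℝ) • (1 : Matrix (Fin 2) (Fin 2) ℂ))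
          = !![Complex.ofReal 3, Complex.ofReal 0 + Complex.ofReal 0 * Complex.I;
               Complex.ofReal 0 - Complex.ofReal 0 * Complex.I, Complex.ofReal 3] := by
        ext i j
        fin_cases i <;> fin_cases j <;>
          simp [Matrix.smul_apply, Matrix.one_apply, Complex.real_smul]
      fin_cases l
      simp only [Matrix.cons_val_zero]
      rw [h3]
      exact psd2' 3 3 0 0 (by norm_num) (by norm_num) (by norm_num)
    · intro l
      refine ⟨fun a => by norm_num [Matrix.cons_val_zero], ?_, ?_⟩
      · fin_cases l; norm_num [Fin.sum_univ_six]
      · intro α hα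
        obtain ⟨hS, -, -, -⟩ := dep_constraints η α hα
        fin_cases l
        rw [Fin.sum_univ_six]
        simp only [Matrix.cons_val_zero]
        show α 0 * (1/6) + α 1 * (1/6) + α 2 * (1/6) + α 3 * (1/6) + α 4 * (1/6)
          + α 5 * (1/6) = 0
        linarith
    · subst hz
      intro a
      rw [Fin.sum_univ_one]
      show (0:ℝ) • sixStates a + ((1 - 0) * (2:ℝ)⁻¹) • 1 = (1/6 : ℝ) • ((3:ℝ) • (1 : Matrix (Fin 2) (Fin 2) ℂ))
      rw [zero_smul, zero_add, smul_smul]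
      norm_num
  · -- η > 0
    have hsq : 3 * η^2 ≤ 1 := by
      have h2 : η^2 ≤ (1/Real.sqrt 3)^2 := pow_le_pow_left₀ h0 hle 2
      rw [div_pow, one_pow, Real.sq_sqrt (by norm_num : (0:ℝ) ≤ 3)] at h2
      linarith
    refine ⟨8, sig η, qfun, fun l => sig_psd η h0 h1 hsq l, ?_, ?_⟩
    · intro l
      refine ⟨qfun_nonneg l, qfun_sum l, ?_⟩
      intro α hα
      obtain ⟨hS, hz', hx', hy'⟩ := dep_constraints η α hα
      have hηne : η ≠ 0 := ne_of_gt hpos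
      have d1 : α 0 - α 1 = 0 := by rcases mul_eq_zero.mp hz' with h | h; exact absurd h hηne; exact h
      have d2 : α 2 - α 3 = 0 := by rcases mul_eq_zero.mp hx' with h | h; exact absurd h hηne; exact h
      have d3 : α 4 - α 5 = 0 := by rcases mul_eq_zero.mp hy' with h | h; exact absurd h hηne; exact h
      rw [Fin.sum_univ_six, qfun0, qfun1, qfun2, qfun3, qfun4, qfun5]
      linear_combination (sgz l / 6) * d1 + (sgx l / 6) * d2 + (sgy l / 6) * d3 + (1/6) * hS
    · intro a
      show η • sixStates a + ((1 - η) * (2 : ℝ)⁻¹) • 1 = ∑ l : Fin 8, qfun l a • sig η l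
      rw [rho_a, decomp η a]

lemma mat2_ext (M N : Matrix (Fin 2) (Fin 2) ℂ) (h00 : M 0 0 = N 0 0) (h01 : M 0 1 = N 0 1)
    (h10 : M 1 0 = N 1 0) (h11 : M 1 1 = N 1 1) : M = N := by
  ext i j; fin_cases i <;> fin_cases j <;> assumption

lemma depsum (η : ℝ) (β : Fin 6 → ℝ) :
    ∑ a : Fin 6, β a • (η • sixStates a + ((1 - η) * (2:ℝ)⁻¹) • (1 : Matrix (Fin 2) (Fin 2) ℂ))
      = ∑ a : Fin 6, β a • mats η a :=
  Finset.sum_congr rfl fun a _ => by rw [rho_a]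

lemma dep1 (η : ℝ) :
    ∑ a : Fin 6, (![(1:ℝ),1,-1,-1,0,0]) a • (η • sixStates a + ((1 - η) * (2:ℝ)⁻¹) •
      (1 : Matrix (Fin 2) (Fin 2) ℂ)) = 0 := by
  rw [depsum, Fin.sum_univ_six]
  apply mat2_ext <;>
    (simp only [Matrix.add_apply, Matrix.smul_apply, Matrix.zero_apply, mats,
       Matrix.cons_val', Matrix.cons_val_zero, Matrix.cons_val_one, Matrix.head_cons,
       Matrix.empty_val', Matrix.cons_val_fin_one, Matrix.head_fin_const, Matrix.of_apply,
       Matrix.cons_val_two, Matrix.cons_val_three, Matrix.cons_val_four, Matrix.tail_cons,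
       show (5:Fin 6) = Fin.succ 4 from rfl, Matrix.cons_val_succ, Complex.real_smul]
     push_cast
     ring)

lemma dep2 (η : ℝ) :
    ∑ a : Fin 6, (![(1:ℝ),1,0,0,-1,-1]) a • (η • sixStates a + ((1 - η) * (2:ℝ)⁻¹) •
      (1 : Matrix (Fin 2) (Fin 2) ℂ)) = 0 := by
  rw [depsum, Fin.sum_univ_six]
  apply mat2_ext <;>
    (simp only [Matrix.add_apply, Matrix.smul_apply, Matrix.zero_apply, mats,
       Matrix.cons_val', Matrix.cons_val_zero, Matrix.cons_val_one, Matrix.head_cons,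
       Matrix.empty_val', Matrix.cons_val_fin_one, Matrix.head_fin_const, Matrix.of_apply,
       Matrix.cons_val_two, Matrix.cons_val_three, Matrix.cons_val_four, Matrix.tail_cons,
       show (5:Fin 6) = Fin.succ 4 from rfl, Matrix.cons_val_succ, Complex.real_smul]
     push_cast
     ring)

lemma hard (η : ℝ) (h0 : 0 ≤ η)
    (h : IsClassicalStates (fun a : Fin 6 =>
      η • sixStates a + ((1 - η) * (2 : ℝ)⁻¹) • (1 : Matrix (Fin 2) (Fin 2) ℂ))) :
    η ≤ 1 / Real.sqrt 3 := by
  obtain ⟨n, σ, q, hσ, hq, hρ⟩ := h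
  -- entry equations
  have entry : ∀ (a : Fin 6) (i j : Fin 2), mats η a i j = ∑ l, (q l a : ℂ) * σ l i j := by
    intro a i j
    have hm : mats η a = ∑ l, q l a • σ l := by rw [← rho_a]; exact hρ a
    rw [hm, Matrix.sum_apply]
    exact Finset.sum_congr rfl fun l _ => by simp [Matrix.smul_apply, Complex.real_smul]
  have reE : ∀ (a : Fin 6) (i j : Fin 2), (mats η a i j).re = ∑ l, q l a * (σ l i j).re := by
    intro a i j
    rw [entry a i j, Complex.re_sum]
    exact Finset.sum_congr rfl fun l _ => by simp [Complex.mul_re]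
  have imE : ∀ (a : Fin 6) (i j : Fin 2), (mats η a i j).im = ∑ l, q l a * (σ l i j).im := by
    intro a i j
    rw [entry a i j, Complex.im_sum]
    exact Finset.sum_congr rfl fun l _ => by simp [Complex.mul_im]
  set A : Fin n → ℝ := fun l => (σ l 0 0).re with hA
  set D : Fin n → ℝ := fun l => (σ l 1 1).re with hD
  set R : Fin n → ℝ := fun l => (σ l 0 1).re with hR
  set I : Fin n → ℝ := fun l => (σ l 0 1).im with hI
  -- the eight entry equations
  have E1 : (1+η)/2 = ∑ l, q l 0 * A l := by
    have := reE 0 0 0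
    rwa [show mats η 0 0 0 = Complex.ofReal ((1+η)/2) from rfl, Complex.ofReal_re] at this
  have E2 : (1-η)/2 = ∑ l, q l 1 * A l := by
    have := reE 1 0 0
    rwa [show mats η 1 0 0 = Complex.ofReal ((1-η)/2) from rfl, Complex.ofReal_re] at this
  have E3 : (1-η)/2 = ∑ l, q l 0 * D l := by
    have := reE 0 1 1
    rwa [show mats η 0 1 1 = Complex.ofReal ((1-η)/2) from rfl, Complex.ofReal_re] at this
  have E4 : (1+η)/2 = ∑ l, q l 1 * D l := by
    have := reE 1 1 1
    rwa [show mats η 1 1 1 = Complex.ofReal ((1+η)/2) from rfl, Complex.ofReal_re] at this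
  have E5 : η/2 = ∑ l, q l 2 * R l := by
    have := reE 2 0 1
    rwa [show mats η 2 0 1 = Complex.ofReal (η/2) from rfl, Complex.ofReal_re] at this
  have E6 : -η/2 = ∑ l, q l 3 * R l := by
    have := reE 3 0 1
    rwa [show mats η 3 0 1 = Complex.ofReal (-η/2) from rfl, Complex.ofReal_re] at this
  have E7 : -(η/2) = ∑ l, q l 4 * I l := by
    have h' := imE 4 0 1
    rw [show mats η 4 0 1 = Complex.ofReal (η/2) * (-Complex.I) from rfl] at h'
    simpa using h'
  have E8 : η/2 = ∑ l, q l 5 * I l := by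
    have h' := imE 5 0 1
    rw [show mats η 5 0 1 = Complex.ofReal (η/2) * Complex.I from rfl] at h'
    simpa using h'
  have E9 : ∀ a : Fin 6, a = 2 ∨ a = 3 ∨ a = 4 ∨ a = 5 →
      (2:ℝ)⁻¹ = ∑ l, q l a * A l ∧ (2:ℝ)⁻¹ = ∑ l, q l a * D l := by
    rintro a (rfl | rfl | rfl | rfl) <;> constructor
    · have := reE 2 0 0
      rwa [show mats η 2 0 0 = Complex.ofReal (2⁻¹) from rfl, Complex.ofReal_re] at this
    · have := reE 2 1 1
      rwa [show mats η 2 1 1 = Complex.ofReal (2⁻¹) from rfl, Complex.ofReal_re] at this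
    · have := reE 3 0 0
      rwa [show mats η 3 0 0 = Complex.ofReal (2⁻¹) from rfl, Complex.ofReal_re] at this
    · have := reE 3 1 1
      rwa [show mats η 3 1 1 = Complex.ofReal (2⁻¹) from rfl, Complex.ofReal_re] at this
    · have := reE 4 0 0
      rwa [show mats η 4 0 0 = Complex.ofReal (2⁻¹) from rfl, Complex.ofReal_re] at this
    · have := reE 4 1 1
      rwa [show mats η 4 1 1 = Complex.ofReal (2⁻¹) from rfl, Complex.ofReal_re] at this
    · have := reE 5 0 0
      rwa [show mats η 5 0 0 = Complex.ofReal (2⁻¹) from rfl, Complex.ofReal_re] at this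
    · have := reE 5 1 1
      rwa [show mats η 5 1 1 = Complex.ofReal (2⁻¹) from rfl, Complex.ofReal_re] at this
  -- polytope facts
  have qpos : ∀ l a, 0 ≤ q l a := fun l => (hq l).1
  have qsum : ∀ l, q l 0 + q l 1 + q l 2 + q l 3 + q l 4 + q l 5 = 1 := by
    intro l
    have := (hq l).2.1
    rwa [Fin.sum_univ_six] at this
  have pair1 : ∀ l, q l 0 + q l 1 - q l 2 - q l 3 = 0 := by
    intro l
    have h' := (hq l).2.2 ![(1:ℝ),1,-1,-1,0,0] (dep1 η)
    rw [Fin.sum_univ_six,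
      show (![(1:ℝ),1,-1,-1,0,0]) 0 = 1 from rfl, show (![(1:ℝ),1,-1,-1,0,0]) 1 = 1 from rfl,
      show (![(1:ℝ),1,-1,-1,0,0]) 2 = -1 from rfl, show (![(1:ℝ),1,-1,-1,0,0]) 3 = -1 from rfl,
      show (![(1:ℝ),1,-1,-1,0,0]) 4 = 0 from rfl, show (![(1:ℝ),1,-1,-1,0,0]) 5 = 0 from rfl] at h'
    linarith
  have pair2 : ∀ l, q l 0 + q l 1 - q l 4 - q l 5 = 0 := by
    intro l
    have h' := (hq l).2.2 ![(1:ℝ),1,0,0,-1,-1] (dep2 η)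
    rw [Fin.sum_univ_six,
      show (![(1:ℝ),1,0,0,-1,-1]) 0 = 1 from rfl, show (![(1:ℝ),1,0,0,-1,-1]) 1 = 1 from rfl,
      show (![(1:ℝ),1,0,0,-1,-1]) 2 = 0 from rfl, show (![(1:ℝ),1,0,0,-1,-1]) 3 = 0 from rfl,
      show (![(1:ℝ),1,0,0,-1,-1]) 4 = -1 from rfl, show (![(1:ℝ),1,0,0,-1,-1]) 5 = -1 from rfl] at h'
    linarith
  have third : ∀ l, q l 0 + q l 1 = 1/3 ∧ q l 2 + q l 3 = 1/3 ∧ q l 4 + q l 5 = 1/3 := by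
    intro l
    refine ⟨?_, ?_, ?_⟩ <;> linarith [qsum l, pair1 l, pair2 l]
  -- PSD facts
  have hermit : ∀ l, σ l 1 0 = (starRingEnd ℂ) (σ l 0 1) := by
    intro l
    have h' := congrArg (fun M : Matrix (Fin 2) (Fin 2) ℂ => M 1 0) (hσ l).1
    simpa [Matrix.conjTranspose_apply] using h'.symm
  have diag0 : ∀ l, 0 ≤ (σ l 0 0).re ∧ (σ l 0 0).im = 0 := by
    intro l
    have h2 := (hσ l).dotProduct_mulVec_nonneg ![1, 0]
    have e : star (![1, 0] : Fin 2 → ℂ) ⬝ᵥ (σ l *ᵥ ![1, 0]) = σ l 0 0 := by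
      simp [dotProduct, Matrix.mulVec, Fin.sum_univ_two]
    rw [e, Complex.le_def] at h2
    exact ⟨by simpa using h2.1, by simpa using h2.2.symm⟩
  have diag1 : ∀ l, 0 ≤ (σ l 1 1).re ∧ (σ l 1 1).im = 0 := by
    intro l
    have h2 := (hσ l).dotProduct_mulVec_nonneg ![0, 1]
    have e : star (![0, 1] : Fin 2 → ℂ) ⬝ᵥ (σ l *ᵥ ![0, 1]) = σ l 1 1 := by
      simp [dotProduct, Matrix.mulVec, Fin.sum_univ_two]
    rw [e, Complex.le_def] at h2
    exact ⟨by simpa using h2.1, by simpa using h2.2.symm⟩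
  have s00 : ∀ l, σ l 0 0 = Complex.ofReal (A l) := by
    intro l
    exact Complex.ext (by simp [hA]) (by simpa using (diag0 l).2)
  have s11 : ∀ l, σ l 1 1 = Complex.ofReal (D l) := by
    intro l
    exact Complex.ext (by simp [hD]) (by simpa using (diag1 l).2)
  have qform : ∀ l (s : ℝ), 0 ≤ (A l * Complex.normSq (σ l 0 1)) * (s * s)
      + (-2 * Complex.normSq (σ l 0 1)) * s + D l := by
    intro l s
    have h2 := (hσ l).dotProduct_mulVec_nonneg ![-(s:ℂ) * σ l 0 1, 1]
    have e : star (![-(s:ℂ) * σ l 0 1, 1] : Fin 2 → ℂ) ⬝ᵥ (σ l *ᵥ ![-(s:ℂ) * σ l 0 1, 1])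
        = Complex.ofReal ((A l * Complex.normSq (σ l 0 1)) * (s * s)
          + (-2 * Complex.normSq (σ l 0 1)) * s + D l) := by
      simp only [dotProduct, Matrix.mulVec, Fin.sum_univ_two, Pi.star_apply,
        Matrix.cons_val_zero, Matrix.cons_val_one, Matrix.head_cons, star_mul', star_neg,
        Complex.star_def, Complex.conj_ofReal, s00 l, s11 l, hermit l,
        map_neg, _root_.map_mul, _root_.map_one]
      push_cast
      linear_combination ((s:ℂ)^2 * Complex.ofReal (A l) - 2*(s:ℂ)) * Complex.mul_conj (σ l 0 1)
    rw [e, Complex.le_def] at h2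
    simpa using h2.1
  have nsq : ∀ l, Complex.normSq (σ l 0 1) ≤ A l * D l := by
    intro l
    have hd := discrim_le_zero (qform l)
    rw [discrim] at hd
    have hnn := Complex.normSq_nonneg (σ l 0 1)
    nlinarith [mul_nonneg (diag0 l).1 (diag1 l).1]
  -- the per-l Cauchy-Schwarz bound
  have key : ∀ l, (q l 2 - q l 3) * (2 * R l) + (q l 4 - q l 5) * (-2 * I l)
      + (q l 0 - q l 1) * (A l - D l) ≤ (A l + D l) / Real.sqrt 3 := by
    intro l
    obtain ⟨p1, p2, p3⟩ := third l
    have b1 : |q l 2 - q l 3| ≤ 1/3 :=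
      abs_le.mpr ⟨by linarith [qpos l 2, qpos l 3], by linarith [qpos l 2, qpos l 3]⟩
    have b2 : |q l 4 - q l 5| ≤ 1/3 :=
      abs_le.mpr ⟨by linarith [qpos l 4, qpos l 5], by linarith [qpos l 4, qpos l 5]⟩
    have b3 : |q l 0 - q l 1| ≤ 1/3 :=
      abs_le.mpr ⟨by linarith [qpos l 0, qpos l 1], by linarith [qpos l 0, qpos l 1]⟩
    have hnormsq : Complex.normSq (σ l 0 1) = R l ^ 2 + I l ^ 2 := by
      rw [Complex.normSq_apply]; ring
    have hr : (2 * R l)^2 + (-2 * I l)^2 + (A l - D l)^2 ≤ (A l + D l)^2 := by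
      nlinarith [nsq l, hnormsq]
    have ht : 0 ≤ A l + D l := by linarith [(diag0 l).1, (diag1 l).1]
    exact cs_bound _ _ _ _ _ _ _ b1 b2 b3 hr ht
  -- sum of the bound
  have hsumB : ∑ l, ((q l 2 - q l 3) * (2 * R l) + (q l 4 - q l 5) * (-2 * I l)
      + (q l 0 - q l 1) * (A l - D l)) = 6 * η := by
    have expand : ∀ l : Fin n, (q l 2 - q l 3) * (2 * R l) + (q l 4 - q l 5) * (-2 * I l)
        + (q l 0 - q l 1) * (A l - D l)
        = 2*(q l 2 * R l) - 2*(q l 3 * R l) - 2*(q l 4 * I l) + 2*(q l 5 * I l)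
          + (q l 0 * A l) - (q l 0 * D l) - (q l 1 * A l) + (q l 1 * D l) := fun l => by ring
    rw [Finset.sum_congr rfl fun l _ => expand l]
    simp only [Finset.sum_add_distrib, Finset.sum_sub_distrib, ← Finset.mul_sum]
    rw [← E1, ← E2, ← E3, ← E4, ← E5, ← E6, ← E7, ← E8]
    ring
  have htr : ∑ l, (A l + D l) = 6 := by
    have expand : ∀ l : Fin n, A l + D l
        = (q l 0 * A l) + (q l 1 * A l) + (q l 2 * A l) + (q l 3 * A l) + (q l 4 * A l)
          + (q l 5 * A l) + (q l 0 * D l) + (q l 1 * D l) + (q l 2 * D l) + (q l 3 * D l)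
          + (q l 4 * D l) + (q l 5 * D l) := fun l => by
      have := qsum l; linear_combination (-(A l + D l)) * this
    rw [Finset.sum_congr rfl fun l _ => expand l]
    simp only [Finset.sum_add_distrib]
    rw [← E1, ← E2, ← E3, ← E4,
      ← (E9 2 (by norm_num)).1, ← (E9 2 (by norm_num)).2,
      ← (E9 3 (by norm_num)).1, ← (E9 3 (by norm_num)).2,
      ← (E9 4 (by norm_num)).1, ← (E9 4 (by norm_num)).2,
      ← (E9 5 (by norm_num)).1, ← (E9 5 (by norm_num)).2]
    ring
  have hfin : 6 * η ≤ 6 / Real.sqrt 3 := by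
    calc 6 * η = ∑ l, ((q l 2 - q l 3) * (2 * R l) + (q l 4 - q l 5) * (-2 * I l)
        + (q l 0 - q l 1) * (A l - D l)) := hsumB.symm
      _ ≤ ∑ l, (A l + D l) / Real.sqrt 3 := Finset.sum_le_sum fun l _ => key l
      _ = (∑ l, (A l + D l)) / Real.sqrt 3 := by rw [Finset.sum_div]
      _ = 6 / Real.sqrt 3 := by rw [htr]
  have hs : 0 < Real.sqrt 3 := by positivity
  have hss : (6 / Real.sqrt 3) * Real.sqrt 3 = 6 := by field_simp
  rw [le_div_iff₀ hs]
  nlinarith [mul_le_mul_of_nonneg_right hfin hs.le, hss]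

theorem six_states_white_noise_robustness (η : ℝ) (hη : η ∈ Set.Icc (0 : ℝ) 1) :
    IsClassicalStates
        (fun a : Fin 6 =>
          η • sixStates a + ((1 - η) * (2 : ℝ)⁻¹) • (1 : Matrix (Fin 2) (Fin 2) ℂ)) ↔
      η ≤ 1 / Real.sqrt 3 := by
  constructor
  · exact fun h => hard η hη.1 h
  · exact fun h => easy η hη.1 hη.2 h
end
end

section
/- Let d ≥ 1, let A be a finite set, and let ρ : A → Matrix (Fin d) (Fin d) ℂ be a set of pure states, i.e. for every a there is a nonzero vector v_a ∈ ℂ^d with ρ_a = v_a v_aᴴ and Tr(ρ_a) = 1. Suppose the set of states ρ is nonclassical. Then for every ω ∈ [0,1), there do NOT exist families γ : A → Matrix (Fin d) (Fin d) ℂ and κ : A → Matrix (Fin d) (Fin d) ℂ of density matrices (positive semidefinite, trace 1) such that (i) ρ_a = ω • γ_a + (1−ω) • κ_a for all a, (ii) for every α : A → ℝ with ∑_a α(a) • ρ_a = 0 one has ∑_a α(a) • γ_a = 0 and ∑_a α(a) • κ_a = 0, and (iii) the set of states κ is classical. (In other words, the nonclassical fraction of any nonclassical set of pure states equals 1.)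 -/
open Matrix BigOperators
open scoped ComplexOrder

noncomputable section

lemma real_smul_matrix_eq {d : ℕ} (r : ℝ) (A : Matrix (Fin d) (Fin d) ℂ) :
    r • A = (r : ℂ) • A := by
  ext i j; simp [Matrix.smul_apply, Complex.real_smul]

lemma posSemidef_ofReal_smul {d : ℕ} {A : Matrix (Fin d) (Fin d) ℂ} (hA : A.PosSemidef)
    {r : ℝ} (hr : 0 ≤ r) : ((r : ℂ) • A).PosSemidef := by
  refine posSemidef_iff_dotProduct_mulVec.mpr ⟨?_, ?_⟩
  · rw [Matrix.IsHermitian, conjTranspose_smul, hA.1]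
    congr 1
    simp [Complex.ext_iff]
  · intro x
    rw [smul_mulVec, dotProduct_smul, smul_eq_mul]
    exact mul_nonneg (by exact_mod_cast hr) (hA.dotProduct_mulVec_nonneg x)

lemma rankOne_dominates {d : ℕ} {v : Fin d → ℂ} (hv : star v ⬝ᵥ v = 1)
    {X : Matrix (Fin d) (Fin d) ℂ} (hX : X.PosSemidef)
    (hdom : (Matrix.of (fun i j => v i * star (v j)) - X).PosSemidef) :
    X = X.trace • Matrix.of (fun i j => v i * star (v j)) := by
  set M : Matrix (Fin d) (Fin d) ℂ := Matrix.of (fun i j => v i * star (v j)) with hM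
  have hMv : ∀ w, M *ᵥ w = (star v ⬝ᵥ w) • v := by
    intro w; ext i
    simp only [hM, Matrix.mulVec, dotProduct, Matrix.of_apply, Pi.smul_apply, smul_eq_mul,
      Pi.star_apply, Finset.sum_mul, mul_comm, mul_assoc, mul_left_comm]
    rw [Finset.mul_sum]
  have hker : ∀ w, star v ⬝ᵥ w = 0 → X *ᵥ w = 0 := by
    intro w hw
    rw [← hX.dotProduct_mulVec_zero_iff]
    have h1 : star w ⬝ᵥ M *ᵥ w = 0 := by rw [hMv w, hw, zero_smul, dotProduct_zero]
    have h2 := hdom.dotProduct_mulVec_nonneg w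
    rw [Matrix.sub_mulVec, dotProduct_sub, h1, zero_sub] at h2
    exact le_antisymm (neg_nonneg.mp h2) (hX.dotProduct_mulVec_nonneg w)
  have hstep : ∀ u, X *ᵥ u = (star v ⬝ᵥ u) • (X *ᵥ v) := by
    intro u
    have hw : star v ⬝ᵥ (u - (star v ⬝ᵥ u) • v) = 0 := by
      rw [dotProduct_sub, dotProduct_smul, hv, smul_eq_mul, mul_one, sub_self]
    have h := hker _ hw
    rw [Matrix.mulVec_sub, Matrix.mulVec_smul, sub_eq_zero] at h
    exact h
  have hentry : ∀ i j, X i j = (X *ᵥ v) i * star (v j) := by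
    intro i j
    have h := congrFun (hstep (Pi.single j 1)) i
    simpa [Matrix.mulVec_single, dotProduct_single, Pi.star_apply, mul_one,
      Pi.smul_apply, smul_eq_mul, mul_comm] using h
  obtain ⟨i0, hi0⟩ : ∃ i, v i ≠ 0 := by
    by_contra h
    push_neg at h
    simp [dotProduct, h] at hv
  have hherm : ∀ i j, X i j = star (X j i) := fun i j => (hX.1.apply i j).symm
  have hXv : ∀ j, (X *ᵥ v) j = (star ((X *ᵥ v) i0) / star (v i0)) * v j := by
    intro j
    have e1 : X i0 j = (X *ᵥ v) i0 * star (v j) := hentry i0 j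
    have e2 : X i0 j = star ((X *ᵥ v) j) * v i0 := by
      rw [hherm i0 j, hentry j i0]
      simp [mul_comm]
    have e3 : star ((X *ᵥ v) j) * v i0 = (X *ᵥ v) i0 * star (v j) := by rw [← e2, e1]
    have e4 : (X *ᵥ v) j * star (v i0) = star ((X *ᵥ v) i0) * v j := by
      have := congrArg star e3
      simpa [mul_comm] using this
    have hvi0 : star (v i0) ≠ 0 := star_ne_zero.mpr hi0
    rw [div_mul_eq_mul_div, eq_div_iff hvi0]
    exact e4
  set c : ℂ := star ((X *ᵥ v) i0) / star (v i0) with hc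
  have hXij : ∀ i j, X i j = c * (v i * star (v j)) := by
    intro i j
    rw [hentry i j, hXv i]
    ring
  have hv' : ∑ i, v i * star (v i) = 1 := by
    rw [← hv, dotProduct]
    exact Finset.sum_congr rfl fun i _ => mul_comm _ _
  have htrc : X.trace = c := by
    rw [Matrix.trace]
    simp only [Matrix.diag]
    rw [Finset.sum_congr rfl fun i _ => hXij i i, ← Finset.mul_sum, hv', mul_one]
  ext i j
  rw [Matrix.smul_apply, hM, Matrix.of_apply, smul_eq_mul, htrc]
  exact hXij i j


theorem nonclassical_fraction_of_pure_states_is_one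
    {d : ℕ} (hd : 1 ≤ d) {A : Type*} [Fintype A]
    (ρ : A → Matrix (Fin d) (Fin d) ℂ)
    (hpure : ∀ a, ∃ v : Fin d → ℂ, v ≠ 0 ∧
      ρ a = Matrix.of (fun i j => v i * star (v j)))
    (htr : ∀ a, (ρ a).trace = 1)
    (hnc : ¬ IsClassicalStates ρ)
    (ω : ℝ) (hω0 : 0 ≤ ω) (hω1 : ω < 1) :
    ¬ ∃ γ κ : A → Matrix (Fin d) (Fin d) ℂ,
        (∀ a, (γ a).PosSemidef) ∧ (∀ a, (γ a).trace = 1) ∧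
        (∀ a, (κ a).PosSemidef) ∧ (∀ a, (κ a).trace = 1) ∧
        (∀ a, ρ a = ω • γ a + (1 - ω) • κ a) ∧
        (∀ α : A → ℝ, (∑ a : A, α a • ρ a = 0) →
          (∑ a : A, α a • γ a = 0) ∧ (∑ a : A, α a • κ a = 0)) ∧
        IsClassicalStates κ := by
  rintro ⟨γ, κ, hγps, hγtr, hκps, hκtr, hdec, -, hκcl⟩
  have h1ω : (0:ℝ) < 1 - ω := by linarith
  have hκρ : κ = ρ := by
    funext a
    obtain ⟨v, hv0, hρa⟩ := hpure a
    have h1 : ∑ i, v i * star (v i) = 1 := by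
      have := htr a
      rw [hρa] at this
      simpa [Matrix.trace, Matrix.diag] using this
    have hv1 : star v ⬝ᵥ v = 1 := by
      rw [dotProduct, ← h1]
      exact Finset.sum_congr rfl fun i _ => mul_comm _ _
    have hXps : (((1 - ω : ℝ) : ℂ) • κ a).PosSemidef :=
      posSemidef_ofReal_smul (hκps a) (le_of_lt h1ω)
    have hdom : (Matrix.of (fun i j => v i * star (v j)) - ((1 - ω : ℝ) : ℂ) • κ a).PosSemidef := by
      have heq : Matrix.of (fun i j => v i * star (v j)) - ((1 - ω : ℝ) : ℂ) • κ a
          = ((ω : ℝ) : ℂ) • γ a := by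
        rw [← real_smul_matrix_eq, ← real_smul_matrix_eq, ← hρa, hdec a]
        abel
      rw [heq]
      exact posSemidef_ofReal_smul (hγps a) hω0
    have hkey := rankOne_dominates hv1 hXps hdom
    have htrX : (((1 - ω : ℝ) : ℂ) • κ a).trace = ((1 - ω : ℝ) : ℂ) := by
      rw [Matrix.trace_smul, hκtr a, smul_eq_mul, mul_one]
    rw [htrX, ← hρa] at hkey
    have hne : ((1 - ω : ℝ) : ℂ) ≠ 0 := by
      exact_mod_cast ne_of_gt h1ω
    exact smul_right_injective (Matrix (Fin d) (Fin d) ℂ) hne hkey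
  rw [hκρ] at hκcl
  exact hnc hκcl
end
end
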